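/- If R : X ↔ 𝒫Y is an inner deterministic multirelation and S : Y ↔ 𝒫Z is any multirelation, then the Peleg composition satisfies R ∗ S = {(a,C) | ∃ b, (a,{b}) ∈ R ∧ (b,C) ∈ S}; equivalently, R ∗ S equals the relational composition of α(R) with S. -/
import Mathlib


universe u v w x

variable {X : Type u} {Y : Type v} {Z : Type w} {W : Type x}

/-- Relational composition. -/
def rcomp (R : Set (X × Y)) (S : Set (Y × Z)) : Set (X × Z) :=
  {p | ∃ b, (p.1, b) ∈ R ∧ (b, p.2) ∈ S}

/-- Power transpose Λ. -/
def Lam (R : Set (X × Y)) : Set (X × Set Y) :=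
  {p | p.2 = {b | (p.1, b) ∈ R}}

/-- α : postcomposition with the has-element relation. -/
def alphaM (S : Set (X × Set Y)) : Set (X × Y) :=
  {p | ∃ B, (p.1, B) ∈ S ∧ p.2 ∈ B}

/-- η : singleton embedding. -/
def etaM (R : Set (X × Y)) : Set (X × Set Y) :=
  {p | ∃ b, (p.1, b) ∈ R ∧ p.2 = {b}}

/-- Peleg composition. -/
def peleg (R : Set (X × Set Y)) (S : Set (Y × Set Z)) : Set (X × Set Z) :=
  {p | ∃ B, (p.1, B) ∈ R ∧ ∃ f : Y → Set Z, (∀ b ∈ B, (b, f b) ∈ S) ∧ p.2 = ⋃ b ∈ B, f b}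

/-- Outer deterministic: each element relates to exactly one set. -/
def OuterDet (R : Set (X × Set Y)) : Prop := ∀ a, ∃! B, (a, B) ∈ R

/-- Inner deterministic: every related set is a singleton. -/
def InnerDet (R : Set (X × Set Y)) : Prop := ∀ a B, (a, B) ∈ R → ∃ b, B = {b}

/-- Inner univalent: every related set is empty or a singleton. -/
def InnerUniv (R : Set (X × Set Y)) : Prop := ∀ a B, (a, B) ∈ R → B = ∅ ∨ ∃ b, B = {b}

/-- The unit 1_X. -/
def oneM (X : Type u) : Set (X × Set X) := {p | p.2 = {p.1}}

/-- Identity relation. -/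
def idR (X : Type u) : Set (X × X) := {p | p.1 = p.2}

/-- Hoare preorder ⊑↓. -/
def hle (R S : Set (X × Set Y)) : Prop := ∀ a A, (a, A) ∈ R → ∃ B, (a, B) ∈ S ∧ A ⊆ B

/-- Smyth preorder ⊑↑. -/
def sle (P Q : Set (X × Set Y)) : Prop := ∀ a B, (a, B) ∈ Q → ∃ A, (a, A) ∈ P ∧ A ⊆ B

/-- Down-closure. -/
def downCl (R : Set (X × Set Y)) : Set (X × Set Y) := {p | ∃ B, (p.1, B) ∈ R ∧ p.2 ⊆ B}

/-- Atoms: pairs whose second component is a singleton. -/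
def atomsM (X : Type u) (Y : Type v) : Set (X × Set Y) := {p | ∃ b, p.2 = {b}}

/-- Terminal part τ(R). -/
def tauM (R : Set (X × Set Y)) : Set (X × Set Y) := {p ∈ R | p.2 = ∅}

/-- Terminal part of R viewed as a multirelation into any other powerset. -/
def tauAs (R : Set (X × Set Y)) : Set (X × Set Z) := {p | (p.1, (∅ : Set Y)) ∈ R ∧ p.2 = ∅}

/-- Outer determinisation (fusion). -/
def deltaO (R : Set (X × Set Y)) : Set (X × Set Y) := Lam (alphaM R)

/-- Inner determinisation (fission). -/
def deltaI (R : Set (X × Set Y)) : Set (X × Set Y) := etaM (alphaM R)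

theorem stmt4 (R : Set (X × Set Y)) (S : Set (Y × Set Z)) (hR : InnerDet R) :
    peleg R S = {p : X × Set Z | ∃ b, (p.1, ({b} : Set Y)) ∈ R ∧ (b, p.2) ∈ S} ∧
    peleg R S = rcomp (alphaM R) S := by
  have h1 : peleg R S = {p : X × Set Z | ∃ b, (p.1, ({b} : Set Y)) ∈ R ∧ (b, p.2) ∈ S} := by
    ext ⟨a, C⟩
    constructor
    · rintro ⟨B, hB, f, hf, rfl⟩
      obtain ⟨b, rfl⟩ := hR a B hB
      exact ⟨b, hB, by simpa using hf b rfl⟩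
    · rintro ⟨b, hb, hS⟩
      exact ⟨{b}, hb, fun _ => C, fun x hx => by simp at hx; subst hx; exact hS, by simp⟩
  refine ⟨h1, ?_⟩
  rw [h1]
  ext ⟨a, C⟩
  simp only [rcomp, alphaM, Set.mem_setOf_eq]
  constructor
  · rintro ⟨b, hb, hS⟩; exact ⟨b, ⟨{b}, hb, rfl⟩, hS⟩
  · rintro ⟨b, ⟨B, hB, hbB⟩, hS⟩
    obtain ⟨c, rfl⟩ := hR a B hB
    simp at hbB; subst hbB
    exact ⟨b, hB, hS⟩
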